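/- arXiv:cs/0505013 — 2 statements merged into one kernel-verified Lean document; each statement's English description precedes it below -/
import Mathlib

section
/- The string addition operation defined via the carry predicate is associative: for all finite X, Y, Z ⊆ ℕ, X + (Y + Z) = (X + Y) + Z, where + is the bitwise addition with carries. -/
def carry (i : ℕ) (U V : Set ℕ) : Prop :=
  ∃ j < i, j ∈ U ∧ j ∈ V ∧ ∀ ℓ, j < ℓ → ℓ < i → Xor' (ℓ ∈ U) (ℓ ∈ V)

def sadd (U V : Set ℕ) : Set ℕ :=
  {i | Xor' (Xor' (i ∈ U) (i ∈ V)) (carry i U V)}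

/-- The set of bits of a natural number. -/
def bitSet (m : ℕ) : Set ℕ := {i | Nat.testBit m i}

/-- Numeric carry condition. -/
def ncarry (m n i : ℕ) : Prop := 2 ^ i ≤ m % 2 ^ i + n % 2 ^ i

lemma mod_succ_cases (m i : ℕ) :
    (Nat.testBit m i = true ∧ m % 2 ^ (i + 1) = m % 2 ^ i + 2 ^ i) ∨
    (Nat.testBit m i = false ∧ m % 2 ^ (i + 1) = m % 2 ^ i) := by
  have h : m / 2 ^ i % 2 = 0 ∨ m / 2 ^ i % 2 = 1 := Nat.mod_two_eq_zero_or_one _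
  rcases h with h | h
  · refine Or.inr ⟨by simp [Nat.testBit_eq_decide_div_mod_eq, h], ?_⟩
    rw [Nat.mod_pow_succ, h, Nat.mul_zero, Nat.add_zero]
  · refine Or.inl ⟨by simp [Nat.testBit_eq_decide_div_mod_eq, h], ?_⟩
    rw [Nat.mod_pow_succ, h, Nat.mul_one]

lemma testBit_mem (m i : ℕ) : i ∈ bitSet m ↔ Nat.testBit m i = true := Iff.rfl

/-- carry on bit sets matches the numeric carry. -/
lemma carry_bitSet (m n i : ℕ) : carry i (bitSet m) (bitSet n) ↔ ncarry m n i := by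
  constructor
  · rintro ⟨j, hj, hm, hn, hx⟩
    rw [testBit_mem] at hm hn
    have key : ∀ d, j + 1 + d ≤ i → 2 ^ (j + 1 + d) ≤ m % 2 ^ (j + 1 + d) + n % 2 ^ (j + 1 + d) := by
      intro d
      induction d with
      | zero =>
        intro _
        simp only [Nat.add_zero]
        rcases mod_succ_cases m j with ⟨h1, h2⟩ | ⟨h1, h2⟩
        · rcases mod_succ_cases n j with ⟨h3, h4⟩ | ⟨h3, h4⟩
          · have := pow_succ 2 j; omega
          · rw [h1] at hm; rw [h3] at hn; simp at hn
        · rw [h1] at hm; simp at hm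
      | succ d ih =>
        intro hle
        have hih := ih (by omega)
        set t := j + 1 + d with ht
        have hxt := hx t (by omega) (by omega)
        simp only [testBit_mem] at hxt
        have hps : (2:ℕ) ^ (t + 1) = 2 ^ t + 2 ^ t := by rw [pow_succ]; ring
        have heq : j + 1 + (d + 1) = t + 1 := by omega
        rw [heq]
        rcases mod_succ_cases m t with ⟨h1, h2⟩ | ⟨h1, h2⟩ <;>
          rcases mod_succ_cases n t with ⟨h3, h4⟩ | ⟨h3, h4⟩
        · exact absurd hxt (by simp [Xor', h1, h3])
        · omega
        · omega
        · exact absurd hxt (by simp [Xor', h1, h3])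
    obtain ⟨d, hd⟩ : ∃ d, i = j + 1 + d := ⟨i - (j + 1), by omega⟩
    subst hd
    exact key d le_rfl
  · intro h
    by_contra hc
    have key : ∀ k, ¬ carry k (bitSet m) (bitSet n) → m % 2 ^ k + n % 2 ^ k < 2 ^ k := by
      intro k
      induction k with
      | zero => intro _; simp only [pow_zero]; omega
      | succ t ih =>
        intro hnc
        have hps : (2:ℕ) ^ (t + 1) = 2 ^ t + 2 ^ t := by rw [pow_succ]; ring
        have hmlt : m % 2 ^ t < 2 ^ t := Nat.mod_lt _ (Nat.pow_pos (by norm_num))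
        have hnlt : n % 2 ^ t < 2 ^ t := Nat.mod_lt _ (Nat.pow_pos (by norm_num))
        rcases mod_succ_cases m t with ⟨h1, h2⟩ | ⟨h1, h2⟩ <;>
          rcases mod_succ_cases n t with ⟨h3, h4⟩ | ⟨h3, h4⟩
        · exfalso
          exact hnc ⟨t, by omega, (testBit_mem m t).2 h1, (testBit_mem n t).2 h3,
            fun ℓ h5 h6 => absurd (by omega) (Nat.not_lt.2 h5)⟩
        · have hnct : ¬ carry t (bitSet m) (bitSet n) := by
            rintro ⟨j, hj, hjm, hjn, hxj⟩
            exact hnc ⟨j, by omega, hjm, hjn, fun ℓ h5 h6 => by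
              rcases Nat.lt_or_ge ℓ t with h7 | h7
              · exact hxj ℓ h5 h7
              · rw [show ℓ = t by omega]
                exact Or.inl ⟨(testBit_mem m t).2 h1, by simp [testBit_mem, h3]⟩⟩
          have := ih hnct
          omega
        · have hnct : ¬ carry t (bitSet m) (bitSet n) := by
            rintro ⟨j, hj, hjm, hjn, hxj⟩
            exact hnc ⟨j, by omega, hjm, hjn, fun ℓ h5 h6 => by
              rcases Nat.lt_or_ge ℓ t with h7 | h7
              · exact hxj ℓ h5 h7
              · rw [show ℓ = t by omega]
                exact Or.inr ⟨(testBit_mem n t).2 h3, by simp [testBit_mem, h1]⟩⟩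
          have := ih hnct
          omega
        · omega
    have := key i hc
    unfold ncarry at h
    omega

/-- testBit of a sum in terms of xor and carry. -/
lemma testBit_add_iff (m n i : ℕ) :
    Nat.testBit (m + n) i = true ↔
      Xor' (Xor' (Nat.testBit m i = true) (Nat.testBit n i = true)) (ncarry m n i) := by
  have hp : 0 < 2 ^ i := Nat.pow_pos (by norm_num)
  have hmlt : m % 2 ^ i < 2 ^ i := Nat.mod_lt _ hp
  have hnlt : n % 2 ^ i < 2 ^ i := Nat.mod_lt _ hp
  have hdiv : (m + n) / 2 ^ i = m / 2 ^ i + n / 2 ^ i + (m % 2 ^ i + n % 2 ^ i) / 2 ^ i := by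
    conv_lhs => rw [← Nat.div_add_mod m (2 ^ i), ← Nat.div_add_mod n (2 ^ i)]
    rw [show 2 ^ i * (m / 2 ^ i) + m % 2 ^ i + (2 ^ i * (n / 2 ^ i) + n % 2 ^ i)
        = (m % 2 ^ i + n % 2 ^ i) + (m / 2 ^ i + n / 2 ^ i) * 2 ^ i by ring]
    rw [Nat.add_mul_div_right _ _ hp]
    omega
  by_cases hcar : ncarry m n i
  · have hc : (m % 2 ^ i + n % 2 ^ i) / 2 ^ i = 1 := by
      unfold ncarry at hcar
      rw [Nat.div_eq_sub_div hp hcar, Nat.div_eq_of_lt (by omega)]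
    simp only [Nat.testBit_eq_decide_div_mod_eq, decide_eq_true_eq, hdiv, hc, Xor', Xor,
      iff_true_intro hcar, and_true, not_true, and_false, or_false, true_and, false_or,
      not_false_iff, not_or, not_and, not_not]
    omega
  · have hc : (m % 2 ^ i + n % 2 ^ i) / 2 ^ i = 0 := by
      unfold ncarry at hcar
      exact Nat.div_eq_of_lt (by omega)
    simp only [Nat.testBit_eq_decide_div_mod_eq, decide_eq_true_eq, hdiv, hc, Nat.add_zero, Xor', Xor,
      iff_false_intro hcar, and_false, false_and, or_false, false_or, not_false_iff, and_true,
      not_or, not_and, not_not]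
    omega

lemma sadd_bitSet (m n : ℕ) : sadd (bitSet m) (bitSet n) = bitSet (m + n) := by
  ext i
  simp only [sadd, Set.mem_setOf_eq]
  rw [carry_bitSet]
  exact (testBit_add_iff m n i).symm

lemma exists_bitSet (U : Set ℕ) (hU : U.Finite) : ∃ m, U = bitSet m := by
  lift U to Finset ℕ using hU with s
  classical
  induction s using Finset.induction_on with
  | empty => exact ⟨0, by ext i; simp [bitSet]⟩
  | @insert a s ha ih =>
    obtain ⟨m, hm⟩ := ih
    refine ⟨m ||| 2 ^ a, ?_⟩
    ext i
    have hmi : (i : ℕ) ∈ (s : Set ℕ) ↔ Nat.testBit m i := by rw [hm]; rfl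
    simp only [Finset.coe_insert, Set.mem_insert_iff, bitSet, Set.mem_setOf_eq,
      Nat.testBit_or, Nat.testBit_two_pow, Bool.or_eq_true, decide_eq_true_eq]
    constructor
    · rintro (rfl | h)
      · exact Or.inr rfl
      · exact Or.inl (hmi.1 (by exact_mod_cast h))
    · rintro (h | rfl)
      · exact Or.inr (by exact_mod_cast hmi.2 h)
      · exact Or.inl rfl

theorem string_add_assoc (X Y Z : Set ℕ) (hX : X.Finite) (hY : Y.Finite) (hZ : Z.Finite) :
    sadd X (sadd Y Z) = sadd (sadd X Y) Z := by
  obtain ⟨x, rfl⟩ := exists_bitSet X hX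
  obtain ⟨y, rfl⟩ := exists_bitSet Y hY
  obtain ⟨z, rfl⟩ := exists_bitSet Z hZ
  rw [sadd_bitSet, sadd_bitSet, sadd_bitSet, sadd_bitSet, Nat.add_assoc]
end

section
/- For carries in nested binary addition, the multiset {carry(i,Y,Z), carry(i,X,Y+Z)} equals the multiset {carry(i,X,Y), carry(i,X+Y,Z)} for every i; that is, (a_i ∧ b_i ↔ c_i ∧ d_i) and (a_i ∨ b_i ↔ c_i ∨ d_i), where a_i = carry(i,Y,Z), b_i = carry(i,X,Y+Z), c_i = carry(i,X,Y), d_i = carry(i,X+Y,Z). -/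
lemma carry_zero (U V : Set ℕ) : ¬ carry 0 U V := by
  rintro ⟨j, hj, -⟩; omega

lemma carry_succ (i : ℕ) (U V : Set ℕ) :
    carry (i + 1) U V ↔ (i ∈ U ∧ i ∈ V) ∨ (Xor' (i ∈ U) (i ∈ V) ∧ carry i U V) := by
  constructor
  · rintro ⟨j, hj, hU, hV, hx⟩
    rcases eq_or_lt_of_le (Nat.lt_succ_iff.mp hj) with rfl | hji
    · exact Or.inl ⟨hU, hV⟩
    · refine Or.inr ⟨hx i hji (Nat.lt_succ_self i), ⟨j, hji, hU, hV, fun ℓ h1 h2 => hx ℓ h1 (by omega)⟩⟩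
  · rintro (⟨hU, hV⟩ | ⟨hx, j, hj, hU, hV, hrest⟩)
    · exact ⟨i, Nat.lt_succ_self i, hU, hV, fun ℓ h1 h2 => by omega⟩
    · refine ⟨j, by omega, hU, hV, fun ℓ h1 h2 => ?_⟩
      rcases eq_or_lt_of_le (Nat.lt_succ_iff.mp h2) with rfl | h
      · exact hx
      · exact hrest ℓ h1 h

lemma mem_sadd (i : ℕ) (U V : Set ℕ) :
    i ∈ sadd U V ↔ Xor' (Xor' (i ∈ U) (i ∈ V)) (carry i U V) := Iff.rfl

theorem carry_multiset_eq (X Y Z : Set ℕ) (hX : X.Finite) (hY : Y.Finite) (hZ : Z.Finite)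
    (i : ℕ) :
    ((carry i Y Z ∧ carry i X (sadd Y Z)) ↔ (carry i X Y ∧ carry i (sadd X Y) Z)) ∧
    ((carry i Y Z ∨ carry i X (sadd Y Z)) ↔ (carry i X Y ∨ carry i (sadd X Y) Z)) := by
  induction i with
  | zero => simp [carry_zero]
  | succ i ih =>
    obtain ⟨ih1, ih2⟩ := ih
    rw [carry_succ, carry_succ, carry_succ, carry_succ,
      mem_sadd, mem_sadd]
    by_cases hx : i ∈ X <;> by_cases hy : i ∈ Y <;> by_cases hz : i ∈ Z <;>
      by_cases ha : carry i Y Z <;> by_cases hb : carry i X (sadd Y Z) <;>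
      by_cases hc : carry i X Y <;> by_cases hd : carry i (sadd X Y) Z <;>
      simp_all [Xor'] <;> tauto
end
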